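/- arXiv:2602.01191 — 4 statements merged into one kernel-verified Lean document; each statement's English description precedes it below -/
import Mathlib

section
/- For integers ℓ > 2r ≥ 0, the truncated binomial polynomial b_{ℓ,2r}(t) = Σ_{i=0}^{2r} C(ℓ,i) t^i is strictly positive for all real t. -/
open Finset

/-- Pascal identity: the truncated binomial splits. -/
private lemma trunc_pascal (L m : ℕ) (t : ℝ) :
    ∑ i ∈ range (m + 1), ((L+1).choose i : ℝ) * t ^ i =
      (1 + t) * (∑ j ∈ range m, (L.choose j : ℝ) * t ^ j) + (L.choose m : ℝ) * t ^ m := by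
  have e0 := Finset.sum_range_succ' (fun i => ((L+1).choose i : ℝ) * t ^ i) m
  have e1 := Finset.sum_range_succ' (fun j => ((L).choose j : ℝ) * t ^ j) m
  have e2 := Finset.sum_range_succ (fun j => ((L).choose j : ℝ) * t ^ j) m
  simp only [Nat.choose_zero_right, Nat.cast_one, pow_zero, mul_one] at e0 e1
  rw [e0]
  have h1 : ∀ x ∈ range m, ((L+1).choose (x+1) : ℝ) * t^(x+1)
      = (L.choose x : ℝ) * t^x * t + (L.choose (x+1) : ℝ) * t^(x+1) := by
    intro x _; rw [Nat.choose_succ_succ]; push_cast; ring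
  rw [Finset.sum_congr rfl h1, Finset.sum_add_distrib, ← Finset.sum_mul]
  linear_combination e2 - e1

private lemma trunc_deriv (L m : ℕ) (t : ℝ) :
    HasDerivAt (fun s : ℝ => ∑ i ∈ range (m + 1), ((L+1).choose i : ℝ) * s ^ i)
      ((L+1 : ℝ) * ∑ j ∈ range m, (L.choose j : ℝ) * t ^ j) t := by
  have h : HasDerivAt (fun s : ℝ => ∑ i ∈ range (m + 1), ((L+1).choose i : ℝ) * s ^ i)
      (∑ i ∈ range (m + 1), ((L+1).choose i : ℝ) * (i * t ^ (i-1))) t := by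
    apply HasDerivAt.fun_sum
    intro i _
    exact (hasDerivAt_pow i t).const_mul _
  convert h using 1
  rw [Finset.sum_range_succ' (fun i => ((L+1).choose i : ℝ) * (i * t ^ (i-1))) m]
  simp only [Nat.cast_zero, Nat.choose_zero_right, pow_zero, mul_zero, zero_mul, add_zero,
    Nat.add_sub_cancel]
  rw [Finset.mul_sum]
  apply Finset.sum_congr rfl
  intro j _
  have keyn : (L+1) * L.choose j = (L+1).choose (j+1) * (j+1) := Nat.add_one_mul_choose_eq L j
  have key : ((L+1:ℕ):ℝ) * (L.choose j) = ((L+1).choose (j+1):ℝ) * ((j+1:ℕ):ℝ) := by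
    exact_mod_cast keyn
  push_cast at key ⊢
  linear_combination t ^ j * key

/-- Positivity far away from the origin. -/
private lemma trunc_far (ℓ r : ℕ) (hr : 1 ≤ r) (h : 2 * r < ℓ) (t : ℝ)
    (ht : (∑ i ∈ range (2*r+1), (ℓ.choose i : ℝ)) + 1 ≤ |t|) :
    0 < ∑ i ∈ range (2 * r + 1), (ℓ.choose i : ℝ) * t ^ i := by
  set S : ℝ := ∑ i ∈ range (2*r+1), (ℓ.choose i : ℝ) with hS
  have hS0 : 0 ≤ S := Finset.sum_nonneg fun i _ => by positivity
  have h1t : 1 ≤ |t| := by linarith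
  have hlow : ∀ i ∈ range (2*r),
      -((ℓ.choose i : ℝ) * |t| ^ (2*r-1)) ≤ (ℓ.choose i : ℝ) * t ^ i := by
    intro i hi
    rw [Finset.mem_range] at hi
    have h1 : |t| ^ i ≤ |t| ^ (2*r-1) := pow_le_pow_right₀ h1t (by omega)
    have h2 : -(|t| ^ i) ≤ t ^ i := by
      have := neg_abs_le (t ^ i)
      rwa [abs_pow] at this
    have hc : (0:ℝ) ≤ ℓ.choose i := by positivity
    nlinarith
  have hsum : -((∑ i ∈ range (2*r), (ℓ.choose i : ℝ)) * |t| ^ (2*r-1))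
      ≤ ∑ i ∈ range (2*r), (ℓ.choose i : ℝ) * t ^ i := by
    rw [Finset.sum_mul, ← Finset.sum_neg_distrib]
    exact Finset.sum_le_sum hlow
  have hS' : (∑ i ∈ range (2*r), (ℓ.choose i : ℝ)) ≤ S := by
    rw [hS, Finset.sum_range_succ]
    have : (0:ℝ) ≤ ℓ.choose (2*r) := by positivity
    linarith
  have habs2 : t ^ (2*r) = |t| ^ (2*r) := by
    rw [← abs_pow, abs_of_nonneg ((even_two_mul r).pow_nonneg t)]
  have hc1 : (1:ℝ) ≤ ℓ.choose (2*r) := by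
    have : 0 < ℓ.choose (2*r) := Nat.choose_pos h.le
    exact_mod_cast this
  have htop : |t| ^ (2*r) ≤ (ℓ.choose (2*r) : ℝ) * t ^ (2*r) := by
    rw [habs2]
    exact le_mul_of_one_le_left (pow_nonneg (abs_nonneg t) _) hc1
  have hpow : |t| ^ (2*r) = |t| ^ (2*r-1) * |t| := by
    rw [← pow_succ]; congr 1; omega
  have hpos : 0 < |t| ^ (2*r-1) := pow_pos (by linarith) _
  rw [Finset.sum_range_succ]
  have key : (S+1) * |t| ^ (2*r-1) ≤ |t| ^ (2*r) := by
    rw [hpow]; nlinarith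
  nlinarith

theorem truncated_binomial_pos (ℓ r : ℕ) (h : 2 * r < ℓ) (t : ℝ) :
    0 < ∑ i ∈ Finset.range (2 * r + 1), (ℓ.choose i : ℝ) * t ^ i := by
  rcases Nat.eq_zero_or_pos r with hr | hr
  · subst hr; simp
  obtain ⟨L, rfl⟩ : ∃ L, ℓ = L + 1 := ⟨ℓ - 1, by omega⟩
  set f : ℝ → ℝ := fun s => ∑ i ∈ range (2*r+1), ((L+1).choose i : ℝ) * s ^ i with hf
  set g : ℝ → ℝ := fun s => ∑ j ∈ range (2*r), (L.choose j : ℝ) * s ^ j with hg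
  set S : ℝ := ∑ i ∈ range (2*r+1), ((L+1).choose i : ℝ) with hS
  set M : ℝ := max (S + 1) |t| with hM
  have hS0 : 0 ≤ S := Finset.sum_nonneg fun i _ => by positivity
  have hM1 : S + 1 ≤ M := le_max_left _ _
  have hMpos : 0 < M := by linarith
  have hcont : ContinuousOn f (Set.Icc (-M) M) := by
    apply Continuous.continuousOn
    exact continuous_finset_sum _ fun i _ => continuous_const.mul (continuous_pow i)
  obtain ⟨t0, ht0mem, ht0min⟩ := (isCompact_Icc (a := -M) (b := M)).exists_isMinOn
    ⟨0, by constructor <;> linarith⟩ hcont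
  have htmem : t ∈ Set.Icc (-M) M := by
    constructor
    · have h1 := neg_abs_le t; have h2 := le_max_right (S+1) |t|; linarith
    · exact le_trans (le_abs_self t) (le_max_right _ _)
  have hfar : ∀ s : ℝ, S + 1 ≤ |s| → 0 < f s := fun s hs => trunc_far (L+1) r hr h s hs
  refine lt_of_lt_of_le ?_ (ht0min htmem)
  rcases eq_or_ne |t0| M with habs | habs
  · exact hfar t0 (by rw [habs]; exact hM1)
  · have hlt : |t0| < M := lt_of_le_of_ne (abs_le.mpr ht0mem) habs
    have hIoo1 : -M < t0 := by
      have := neg_abs_le t0; nlinarith [abs_lt.mp hlt]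
    have hIoo2 : t0 < M := (abs_lt.mp hlt).2
    have hlocal : IsLocalMin f t0 :=
      ht0min.isLocalMin (Icc_mem_nhds hIoo1 hIoo2)
    have hderiv : deriv f t0 = (L+1 : ℝ) * g t0 := (trunc_deriv L (2*r) t0).deriv
    have hg0 : g t0 = 0 := by
      have h0 := hlocal.deriv_eq_zero
      rw [hderiv] at h0
      have hne : (L+1 : ℝ) ≠ 0 := by positivity
      exact (mul_eq_zero.mp h0).resolve_left hne
    rcases eq_or_ne t0 0 with h0 | h0
    · exfalso
      have hg1 : g 0 = 1 := by
        obtain ⟨k, hk⟩ : ∃ k, 2*r = k+1 := ⟨2*r-1, by omega⟩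
        simp only [hg, hk, Finset.sum_range_succ']
        simp
      rw [h0, hg1] at hg0
      exact one_ne_zero hg0
    · have hid : f t0 = (1 + t0) * g t0 + (L.choose (2*r) : ℝ) * t0 ^ (2*r) :=
        trunc_pascal L (2*r) t0
      rw [hid, hg0, mul_zero, zero_add]
      have hc : (0:ℝ) < L.choose (2*r) := by
        exact_mod_cast Nat.choose_pos (by omega)
      have hp : 0 < t0 ^ (2*r) := (even_two_mul r).pow_pos h0
      positivity
end

section
/- Let f ∈ ℝ[t] satisfy f'(0) = 0, f(0) = 0, and f(t) ≥ 0 for all real t. If f³ = g₁² + g₂² with g₁, g₂ ∈ ℝ[t], then t² divides g₁ and g₂, and consequently f³ is a sum of two squares of elements of the subring ℝ[t²,t³]. -/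
open Polynomial

lemma pow_mem_adjoin_aux (n : ℕ) :
    (X : Polynomial ℝ) ^ (n + 2) ∈ Algebra.adjoin ℝ ({X ^ 2, X ^ 3} : Set (Polynomial ℝ)) := by
  induction n using Nat.strong_induction_on with
  | _ n ih =>
    match n with
    | 0 => exact Algebra.subset_adjoin (by simp)
    | 1 => exact Algebra.subset_adjoin (by simp)
    | (m+2) =>
      have h1 : (X : Polynomial ℝ) ^ (m + 2 + 2) = X ^ 2 * X ^ (m + 2) := by ring
      rw [h1]
      exact mul_mem (Algebra.subset_adjoin (by simp)) (ih m (by omega))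

lemma sq_dvd_mem_adjoin_aux (g : Polynomial ℝ) (h : X ^ 2 ∣ g) :
    g ∈ Algebra.adjoin ℝ ({X ^ 2, X ^ 3} : Set (Polynomial ℝ)) := by
  obtain ⟨c, rfl⟩ := h
  induction c using Polynomial.induction_on' with
  | add p q hp hq => rw [mul_add]; exact add_mem hp hq
  | monomial n a =>
    have : (X : Polynomial ℝ) ^ 2 * monomial n a = a • X ^ (n + 2) := by
      rw [Polynomial.smul_eq_C_mul, ← Polynomial.C_mul_X_pow_eq_monomial]
      ring
    rw [this]
    exact Subalgebra.smul_mem _ (pow_mem_adjoin_aux n) a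

theorem cusp_cube_sos (f g₁ g₂ : Polynomial ℝ)
    (hd : (Polynomial.derivative f).eval 0 = 0) (h0 : f.eval 0 = 0)
    (hnn : ∀ t : ℝ, 0 ≤ f.eval t) (hsq : f ^ 3 = g₁ ^ 2 + g₂ ^ 2) :
    (X ^ 2 ∣ g₁ ∧ X ^ 2 ∣ g₂) ∧
      ∃ h₁ h₂ : Polynomial ℝ,
        h₁ ∈ Algebra.adjoin ℝ ({X ^ 2, X ^ 3} : Set (Polynomial ℝ)) ∧
        h₂ ∈ Algebra.adjoin ℝ ({X ^ 2, X ^ 3} : Set (Polynomial ℝ)) ∧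
        f ^ 3 = h₁ ^ 2 + h₂ ^ 2 := by
  -- X ∣ f
  obtain ⟨q, hq⟩ : X ∣ f := Polynomial.X_dvd_iff.2 (by rwa [coeff_zero_eq_eval_zero])
  have hq0 : q.eval 0 = 0 := by
    rw [hq, derivative_mul, derivative_X] at hd
    simpa using hd
  obtain ⟨r, hr⟩ : X ∣ q := Polynomial.X_dvd_iff.2 (by rwa [coeff_zero_eq_eval_zero])
  have hf2 : f = X ^ 2 * r := by rw [hq, hr]; ring
  -- g₁, g₂ vanish at 0
  have hev : (g₁.eval 0) ^ 2 + (g₂.eval 0) ^ 2 = 0 := by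
    have := congrArg (Polynomial.eval 0) hsq
    simp only [eval_pow, eval_add, h0] at this
    linarith [this]
  have hg10 : g₁.eval 0 = 0 := by
    have : (g₁.eval 0) ^ 2 = 0 := by nlinarith [sq_nonneg (g₁.eval 0), sq_nonneg (g₂.eval 0)]
    exact pow_eq_zero_iff (by norm_num) |>.1 this
  have hg20 : g₂.eval 0 = 0 := by
    have : (g₂.eval 0) ^ 2 = 0 := by nlinarith [sq_nonneg (g₁.eval 0), sq_nonneg (g₂.eval 0)]
    exact pow_eq_zero_iff (by norm_num) |>.1 this
  obtain ⟨a, ha⟩ : X ∣ g₁ := Polynomial.X_dvd_iff.2 (by rwa [coeff_zero_eq_eval_zero])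
  obtain ⟨b, hb⟩ : X ∣ g₂ := Polynomial.X_dvd_iff.2 (by rwa [coeff_zero_eq_eval_zero])
  -- cancel X²
  have hcancel : X ^ 4 * r ^ 3 = a ^ 2 + b ^ 2 := by
    have h1 : (X : Polynomial ℝ) ^ 2 * (X ^ 4 * r ^ 3) = X ^ 2 * (a ^ 2 + b ^ 2) := by
      rw [hf2, ha, hb] at hsq
      linear_combination hsq
    exact mul_left_cancel₀ (pow_ne_zero 2 Polynomial.X_ne_zero) h1
  have hab : (a.eval 0) ^ 2 + (b.eval 0) ^ 2 = 0 := by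
    have := congrArg (Polynomial.eval 0) hcancel
    simp only [eval_pow, eval_add, eval_mul, eval_X] at this
    linarith [this]
  have ha0 : a.eval 0 = 0 := by
    have : (a.eval 0) ^ 2 = 0 := by nlinarith [sq_nonneg (a.eval 0), sq_nonneg (b.eval 0)]
    exact pow_eq_zero_iff (by norm_num) |>.1 this
  have hb0 : b.eval 0 = 0 := by
    have : (b.eval 0) ^ 2 = 0 := by nlinarith [sq_nonneg (a.eval 0), sq_nonneg (b.eval 0)]
    exact pow_eq_zero_iff (by norm_num) |>.1 this
  obtain ⟨a', ha'⟩ : X ∣ a := Polynomial.X_dvd_iff.2 (by rwa [coeff_zero_eq_eval_zero])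
  obtain ⟨b', hb'⟩ : X ∣ b := Polynomial.X_dvd_iff.2 (by rwa [coeff_zero_eq_eval_zero])
  have hg1 : X ^ 2 ∣ g₁ := ⟨a', by rw [ha, ha']; ring⟩
  have hg2 : X ^ 2 ∣ g₂ := ⟨b', by rw [hb, hb']; ring⟩
  exact ⟨⟨hg1, hg2⟩, g₁, g₂, sq_dvd_mem_adjoin_aux _ hg1, sq_dvd_mem_adjoin_aux _ hg2, hsq⟩
end

section
/- The polynomial t²+1 is not a sum of squares in the ring ℝ[X₀] = {g ∈ ℝ[t] : g(i) ∈ ℝ}. -/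
open Polynomial

theorem X_sq_add_one_not_sos_in_nodal_ring :
    ¬ ∃ (n : ℕ) (g : Fin n → Polynomial ℝ),
        (∀ j, (Polynomial.aeval Complex.I (g j)).im = 0) ∧
        (X ^ 2 + 1 : Polynomial ℝ) = ∑ j, (g j) ^ 2 := by
  rintro ⟨n, g, him, hsum⟩
  -- Evaluate at I
  have h0 : ∑ j, (aeval Complex.I (g j)) ^ 2 = 0 := by
    have := congrArg (aeval Complex.I) hsum
    simp only [map_add, map_pow, map_one, aeval_X, map_sum] at this
    rw [← this]
    simp [Complex.I_sq]
  -- each value is real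
  have hreal : ∀ j, aeval Complex.I (g j) = (((aeval Complex.I (g j)).re : ℝ) : ℂ) := by
    intro j
    apply Complex.ext
    · simp
    · simp [him j]
  have h0' : ∑ j, ((aeval Complex.I (g j)).re) ^ 2 = 0 := by
    have : ((∑ j, ((aeval Complex.I (g j)).re) ^ 2 : ℝ) : ℂ) = 0 := by
      push_cast
      rw [← h0]
      exact Finset.sum_congr rfl fun j _ => by rw [← hreal j]
    exact_mod_cast this
  have hzero : ∀ j, aeval Complex.I (g j) = 0 := by
    intro j
    rw [hreal j]
    have := (Finset.sum_eq_zero_iff_of_nonneg (fun j _ => sq_nonneg _)).mp h0' j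
      (Finset.mem_univ j)
    have : (aeval Complex.I (g j)).re = 0 := by
      nlinarith [this]
    simp [this]
  -- divisibility
  have hmonic : (X ^ 2 + 1 : Polynomial ℝ).Monic := by
    have := monic_X_pow_add_C (1 : ℝ) (n := 2) (by norm_num)
    simpa using this
  have hdvd : ∀ j, (X ^ 2 + 1 : Polynomial ℝ) ∣ g j := by
    intro j
    have hmod := modByMonic_add_div (g j) (X ^ 2 + 1)
    set r := g j %ₘ (X ^ 2 + 1) with hr
    have hdeg : r.degree ≤ 1 := by
      have h2 : (X ^ 2 + 1 : Polynomial ℝ).degree = 2 := by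
        compute_degree!
      have := degree_modByMonic_lt (g j) hmonic
      rw [h2] at this
      exact Order.le_of_lt_succ (by exact_mod_cast this)
    have hrform := eq_X_add_C_of_degree_le_one hdeg
    -- aeval I r = 0
    have hrI : aeval Complex.I r = 0 := by
      have := congrArg (aeval Complex.I) hmod
      simp only [map_add, map_mul, map_pow, map_one, aeval_X] at this
      rw [Complex.I_sq] at this
      simp only [neg_add_cancel, zero_mul, zero_add] at this
      rw [add_zero] at this
      rw [this, hzero j]
    rw [hrform] at hrI
    simp only [map_add, map_mul, aeval_C, aeval_X] at hrI
    have hc1 : r.coeff 1 = 0 := by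
      have := congrArg Complex.im hrI
      simpa using this
    have hc0 : r.coeff 0 = 0 := by
      have := congrArg Complex.re hrI
      simpa [hc1] using this
    have hr0 : r = 0 := by rw [hrform, hc0, hc1]; simp
    have : g j = (X ^ 2 + 1) * (g j /ₘ (X ^ 2 + 1)) := by
      conv_lhs => rw [← hmod]
      rw [hr0, zero_add]
    exact ⟨_, this⟩
  choose q hq using hdvd
  have hfac : (X ^ 2 + 1 : Polynomial ℝ) = (X ^ 2 + 1) * ((X ^ 2 + 1) * ∑ j, q j ^ 2) := by
    calc (X ^ 2 + 1 : Polynomial ℝ) = ∑ j, (g j) ^ 2 := hsum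
      _ = ∑ j, (X ^ 2 + 1) ^ 2 * q j ^ 2 := by
          refine Finset.sum_congr rfl fun j _ => ?_
          rw [hq j, mul_pow]
      _ = (X ^ 2 + 1) * ((X ^ 2 + 1) * ∑ j, q j ^ 2) := by
          rw [Finset.mul_sum, Finset.mul_sum]
          refine Finset.sum_congr rfl fun j _ => by ring
  have hne : (X ^ 2 + 1 : Polynomial ℝ) ≠ 0 := hmonic.ne_zero
  have hone : (1 : Polynomial ℝ) = (X ^ 2 + 1) * ∑ j, q j ^ 2 := by
    apply mul_left_cancel₀ hne
    rw [mul_one, ← hfac]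
  have hunit : IsUnit (X ^ 2 + 1 : Polynomial ℝ) :=
    IsUnit.of_mul_eq_one _ hone.symm
  have := natDegree_eq_zero_of_isUnit hunit
  have h2 : (X ^ 2 + 1 : Polynomial ℝ).natDegree = 2 := by
    compute_degree!
  omega
end

section
/- Let q(t) = a₀ + a₁(1+t²+t⁴) with a₁ ≠ 0 plus a₂·t⁹(1+t²) with a₂ ∈ ℝ, i.e., q(t) = (a₀+a₁) + a₁t² + a₁t⁴ + a₂t⁹ + a₂t¹¹, the pullback of an affine linear form along the parametrization t ↦ (1+t²+t⁴, t⁹(1+t²)). If q ≠ 0, then q has strictly fewer than 11 real roots counted with multiplicity. -/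
open Polynomial

private lemma iter_deriv_add (k : ℕ) (p r : Polynomial ℝ) :
    derivative^[k] (p + r) = derivative^[k] p + derivative^[k] r := by
  induction k generalizing p r with
  | zero => simp
  | succ n ih => simp [Function.iterate_succ_apply, derivative_add, ih]

theorem line_pullback_few_real_roots (a₀ a₁ a₂ : ℝ) (ha₁ : a₁ ≠ 0)
    (q : Polynomial ℝ)
    (hq : q = C (a₀ + a₁) + C a₁ * X ^ 2 + C a₁ * X ^ 4 + C a₂ * X ^ 9 + C a₂ * X ^ 11)
    (hq0 : q ≠ 0) :
    (q.roots).card < 11 := by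
  have h5 : derivative^[5] q = C a₂ * X ^ 4 * (C 15120 + C 55440 * X ^ 2) := by
    subst hq
    simp only [iter_deriv_add, iterate_derivative_C_mul,
      iterate_derivative_X_pow_eq_C_mul, iterate_derivative_C (by norm_num : 0 < 5)]
    norm_num
    ring
  have hkey : (derivative^[5] q).roots.card ≤ 4 := by
    rcases eq_or_ne a₂ 0 with h | h
    · simp [h5, h]
    have hg : (C 15120 + C 55440 * X ^ 2 : ℝ[X]).roots = 0 := by
      apply Multiset.eq_zero_of_forall_notMem
      intro x hx
      have hr := isRoot_of_mem_roots hx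
      rw [IsRoot] at hr
      simp at hr
      nlinarith [sq_nonneg x]
    have hgne : (C 15120 + C 55440 * X ^ 2 : ℝ[X]) ≠ 0 := by
      intro hzero
      have := congrArg (fun p => p.coeff 0) hzero
      simp at this
    have h1 : (C a₂ * X ^ 4 : ℝ[X]) ≠ 0 := by
      simp [h, pow_ne_zero, X_ne_zero]
    rw [h5, roots_mul (mul_ne_zero h1 hgne), roots_mul h1, hg, roots_C, roots_pow, roots_X]
    simp
  have hiter : ∀ n : ℕ, q.roots.card ≤ (derivative^[n] q).roots.card + n := by
    intro n
    induction n with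
    | zero => simp
    | succ k ih =>
      calc q.roots.card ≤ (derivative^[k] q).roots.card + k := ih
        _ ≤ ((derivative^[k] q).derivative.roots.card + 1) + k :=
            add_le_add_left (Polynomial.card_roots_le_derivative _) k
        _ = (derivative^[k+1] q).roots.card + (k+1) := by
            rw [Function.iterate_succ_apply']; ring
  have := hiter 5
  omega
end
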